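/- With c = √(2·log(2/δ₁)) in the setting of the previous concentration bound, with probability at least 1 − δ₁ the random count N_s satisfies √((T_s/2)·log(2/δ₁)) ≤ N_s ≤ 3·√((T_s/2)·log(2/δ₁)). -/

import Mathlib

open MeasureTheory

lemma bernoulli_mgf_le (p : ℝ) (hp0 : 0 ≤ p) (hp1 : p ≤ 1) (s : ℝ) :
    1 - p + p * Real.exp s ≤ Real.exp (p * s + s ^ 2 / 8) := by
  set D : ℝ → ℝ := fun s => 1 - p + p * Real.exp s with hDdef
  have hD : ∀ t, 0 < D t := by
    intro t
    rcases eq_or_lt_of_le hp0 with h | h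
    · simp [hDdef, ← h]
    · have : 0 < p * Real.exp t := by positivity
      simp only [hDdef]; linarith
  set u : ℝ → ℝ := fun t => p * Real.exp t / D t with hudef
  have hDd : ∀ t, HasDerivAt D (p * Real.exp t) t := by
    intro t
    exact ((Real.hasDerivAt_exp t).const_mul p).const_add (1 - p)
  have hud : ∀ t, HasDerivAt u (u t * (1 - u t)) t := by
    intro t
    have h := ((Real.hasDerivAt_exp t).const_mul p).fun_div (hDd t) (hD t).ne'
    have hne := (hD t).ne'
    have heq : u t * (1 - u t) = (p * Real.exp t * D t - p * Real.exp t * (p * Real.exp t)) / D t ^ 2 := by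
      show p * Real.exp t / D t * (1 - p * Real.exp t / D t) = _
      field_simp
    rw [heq]; exact h
  set K : ℝ → ℝ := fun t => p + t / 4 - u t with hKdef
  have hKd : ∀ t, HasDerivAt K (1 / 4 - u t * (1 - u t)) t := by
    intro t
    simpa [hKdef] using (((hasDerivAt_id t).div_const 4).const_add p).fun_sub (hud t)
  have hKmono : Monotone K := by
    apply monotone_of_deriv_nonneg
    · exact fun t => (hKd t).differentiableAt
    · intro t
      rw [(hKd t).deriv]
      nlinarith [sq_nonneg (1 - 2 * u t)]
  have hK0 : K 0 = 0 := by
    simp [hKdef, hudef, hDdef]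
  set F : ℝ → ℝ := fun t => p * t + t ^ 2 / 8 - Real.log (D t) with hFdef
  have hFd : ∀ t, HasDerivAt F (K t) t := by
    intro t
    have hlog : HasDerivAt (fun t => Real.log (D t)) (p * Real.exp t / D t) t :=
      (hDd t).log (hD t).ne'
    have h1 : HasDerivAt (fun t : ℝ => p * t + t ^ 2 / 8) (p + t / 4) t := by
      have h2 : HasDerivAt (fun t : ℝ => p * t) p t := by
        simpa using (hasDerivAt_id t).const_mul p
      have h3 : HasDerivAt (fun t : ℝ => t ^ 2 / 8) (t / 4) t := by
        have : HasDerivAt (fun t : ℝ => t ^ 2 / 8) (((2 : ℕ) : ℝ) * t ^ (2 - 1) / 8) t :=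
          (hasDerivAt_pow 2 t).div_const 8
        convert this using 1
        norm_num
        ring
      exact h2.add h3
    simpa [hFdef, hKdef, hudef] using h1.fun_sub hlog
  have hF0 : F 0 = 0 := by simp [hFdef, hDdef]
  have hFcont : Continuous F := by
    have : Differentiable ℝ F := fun t => (hFd t).differentiableAt
    exact this.continuous
  have hFnonneg : ∀ t, 0 ≤ F t := by
    intro t
    rcases le_total 0 t with h | h
    · have hmono : MonotoneOn F (Set.Ici (0 : ℝ)) := by
        apply monotoneOn_of_deriv_nonneg (convex_Ici 0) hFcont.continuousOn
        · intro x _; exact (hFd x).differentiableAt.differentiableWithinAt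
        · intro x hx
          rw [(hFd x).deriv, ← hK0]
          exact hKmono (le_of_lt (by simpa using hx))
      have := hmono (Set.self_mem_Ici) (Set.mem_Ici.mpr h) h
      linarith [hF0 ▸ this]
    · have hanti : AntitoneOn F (Set.Iic (0 : ℝ)) := by
        apply antitoneOn_of_deriv_nonpos (convex_Iic 0) hFcont.continuousOn
        · intro x _; exact (hFd x).differentiableAt.differentiableWithinAt
        · intro x hx
          rw [(hFd x).deriv, ← hK0]
          exact hKmono (le_of_lt (by simpa using hx))
      have := hanti (Set.mem_Iic.mpr h) (Set.self_mem_Iic) h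
      linarith [hF0 ▸ this]
  have hFs := hFnonneg s
  have hlog_le : Real.log (D s) ≤ p * s + s ^ 2 / 8 := by
    simp only [hFdef] at hFs; linarith
  calc D s = Real.exp (Real.log (D s)) := (Real.exp_log (hD s)).symm
    _ ≤ Real.exp (p * s + s ^ 2 / 8) := Real.exp_le_exp.mpr hlog_le

theorem bernoulli_sum_two_sided
    {Ω : Type*} [MeasurableSpace Ω] (μ : Measure Ω) [IsProbabilityMeasure μ]
    (Ts : ℕ) (hTs : 0 < Ts) (δ₁ : ℝ) (hδ₁ : 0 < δ₁) (hδ₁' : δ₁ < 2 * Real.exp (-1))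
    (c : ℝ) (hc : c = Real.sqrt (2 * Real.log (2 / δ₁)))
    (hc1 : c / Real.sqrt Ts ≤ 1)
    (b : Fin Ts → Ω → ℝ)
    (hmeas : ∀ i, Measurable (b i))
    (hindep : ProbabilityTheory.iIndepFun b μ)
    (h01 : ∀ i ω, b i ω = 0 ∨ b i ω = 1)
    (hp : ∀ i, μ {ω | b i ω = 1} = ENNReal.ofReal (c / Real.sqrt Ts)) :
    ENNReal.ofReal (1 - δ₁) ≤
      μ {ω | Real.sqrt ((Ts : ℝ) / 2 * Real.log (2 / δ₁)) ≤ ∑ i, b i ω ∧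
             ∑ i, b i ω ≤ 3 * Real.sqrt ((Ts : ℝ) / 2 * Real.log (2 / δ₁))} := by
  have hTs0 : (0 : ℝ) < Ts := by exact_mod_cast hTs
  have hδ₁2 : δ₁ < 2 := by
    have : Real.exp (-1) < 1 := by
      rw [Real.exp_lt_one_iff]; norm_num
    linarith
  have hlogpos : 0 < Real.log (2 / δ₁) := by
    apply Real.log_pos
    rw [lt_div_iff₀ hδ₁]; linarith
  set L : ℝ := Real.sqrt ((Ts : ℝ) / 2 * Real.log (2 / δ₁)) with hLdef
  have hL0 : 0 < L := Real.sqrt_pos.mpr (by positivity)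
  have hL2 : L ^ 2 = (Ts : ℝ) / 2 * Real.log (2 / δ₁) := Real.sq_sqrt (by positivity)
  set p : ℝ := c / Real.sqrt Ts with hpdef
  have hc0 : 0 ≤ c := hc ▸ Real.sqrt_nonneg _
  have hp0 : 0 ≤ p := by positivity
  have hc2 : c ^ 2 = 2 * Real.log (2 / δ₁) := by
    rw [hc]; exact Real.sq_sqrt (by positivity)
  have hsTs : Real.sqrt (Ts : ℝ) ^ 2 = (Ts : ℝ) := Real.sq_sqrt hTs0.le
  have hsTs0 : 0 < Real.sqrt (Ts : ℝ) := Real.sqrt_pos.mpr hTs0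
  have hTp : (Ts : ℝ) * p = 2 * L := by
    have hsq : ((Ts : ℝ) * p) ^ 2 = (2 * L) ^ 2 := by
      rw [mul_pow, mul_pow, hL2, hpdef, div_pow, hsTs, hc2]
      field_simp
    calc (Ts : ℝ) * p = Real.sqrt (((Ts : ℝ) * p) ^ 2) := (Real.sqrt_sq (by positivity)).symm
      _ = Real.sqrt ((2 * L) ^ 2) := by rw [hsq]
      _ = 2 * L := Real.sqrt_sq (by positivity)
  have hpval : p = 2 * L / Ts := by
    rw [eq_div_iff hTs0.ne']
    linarith [hTp]
  -- the sum as a function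
  set S : Ω → ℝ := fun ω => ∑ i, b i ω with hSdef
  have hSsum : S = ∑ i, b i := by
    funext ω; rw [Finset.sum_apply]
  have hSmeas : Measurable S := by
    exact Finset.measurable_sum _ (fun i _ => hmeas i)
  -- each b i is an indicator
  have hAmeas : ∀ i, MeasurableSet {ω | b i ω = 1} := fun i =>
    hmeas i (measurableSet_singleton 1)
  have hbind : ∀ i, b i = Set.indicator {ω | b i ω = 1} (fun _ => (1 : ℝ)) := by
    intro i; funext ω
    rcases h01 i ω with h | h
    · have hnot : ω ∉ {ω | b i ω = 1} := by simp [Set.mem_setOf_eq, h]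
      simp [Set.indicator_of_notMem hnot, h]
    · have hmem : ω ∈ {ω | b i ω = 1} := by simp [Set.mem_setOf_eq, h]
      simp [Set.indicator_of_mem hmem, h]
  have hbInt : ∀ i, Integrable (b i) μ := by
    intro i
    rw [hbind i]
    exact (integrable_const 1).indicator (hAmeas i)
  have hbint_eval : ∀ i, ∫ ω, b i ω ∂μ = p := by
    intro i
    conv_lhs => rw [hbind i]
    rw [integral_indicator_const _ (hAmeas i), measureReal_def, hp i, smul_eq_mul, mul_one,
      ENNReal.toReal_ofReal hp0]
  -- mgf computations
  have hexp_eq : ∀ (t : ℝ) (i : Fin Ts),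
      (fun ω => Real.exp (t * b i ω)) = fun ω => 1 + (Real.exp t - 1) * b i ω := by
    intro t i; funext ω
    rcases h01 i ω with h | h <;> simp [h]
  have hexpInt : ∀ (t : ℝ) (i : Fin Ts), Integrable (fun ω => Real.exp (t * b i ω)) μ := by
    intro t i
    rw [hexp_eq t i]
    exact (integrable_const 1).add ((hbInt i).const_mul _)
  have hmgf_i : ∀ (t : ℝ) (i : Fin Ts),
      ProbabilityTheory.mgf (b i) μ t = 1 - p + p * Real.exp t := by
    intro t i
    rw [ProbabilityTheory.mgf, hexp_eq t i, integral_add (integrable_const 1)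
      ((hbInt i).const_mul _), integral_const, integral_const_mul, hbint_eval i]
    simp [measure_univ]
    ring
  have hSInt : ∀ t : ℝ, Integrable (fun ω => Real.exp (t * S ω)) μ := by
    intro t
    rw [hSsum]
    exact hindep.integrable_exp_mul_sum hmeas (fun i _ => hexpInt t i)
  have hmgfS : ∀ t : ℝ, ProbabilityTheory.mgf S μ t ≤
      Real.exp ((Ts : ℝ) * (p * t + t ^ 2 / 8)) := by
    intro t
    rw [hSsum, hindep.mgf_sum hmeas]
    have hbase : ∀ i : Fin Ts, ProbabilityTheory.mgf (b i) μ t = 1 - p + p * Real.exp t :=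
      hmgf_i t
    rw [Finset.prod_congr rfl (fun i _ => hbase i), Finset.prod_const, Finset.card_univ,
      Fintype.card_fin]
    have hb0 : 0 ≤ 1 - p + p * Real.exp t := by
      have h1 : p ≤ 1 := hc1
      have h2 : 0 ≤ p * Real.exp t := by positivity
      linarith
    calc (1 - p + p * Real.exp t) ^ Ts
        ≤ (Real.exp (p * t + t ^ 2 / 8)) ^ Ts := by
          exact pow_le_pow_left₀ hb0 (bernoulli_mgf_le p hp0 hc1 t) Ts
      _ = Real.exp ((Ts : ℝ) * (p * t + t ^ 2 / 8)) := (Real.exp_nat_mul _ Ts).symm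
  have hexp_half : Real.exp (-(2 * L ^ 2 / Ts)) = δ₁ / 2 := by
    have h1 : 2 * L ^ 2 / Ts = Real.log (2 / δ₁) := by
      rw [hL2]; field_simp
    rw [h1, Real.exp_neg, Real.exp_log (by positivity), inv_div]
  -- upper tail
  have hupper : μ {ω | 3 * L ≤ S ω} ≤ ENNReal.ofReal (δ₁ / 2) := by
    rw [ENNReal.le_ofReal_iff_toReal_le (measure_ne_top μ _) (by positivity)]
    have ht0 : (0 : ℝ) ≤ 4 * L / Ts := by positivity
    calc (μ {ω | 3 * L ≤ S ω}).toReal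
        ≤ Real.exp (-(4 * L / Ts) * (3 * L)) * ProbabilityTheory.mgf S μ (4 * L / Ts) :=
          ProbabilityTheory.measure_ge_le_exp_mul_mgf (3 * L) ht0 (hSInt _)
      _ ≤ Real.exp (-(4 * L / Ts) * (3 * L)) *
            Real.exp ((Ts : ℝ) * (p * (4 * L / Ts) + (4 * L / Ts) ^ 2 / 8)) := by
          exact mul_le_mul_of_nonneg_left (hmgfS _) (Real.exp_pos _).le
      _ = Real.exp (-(4 * L / Ts) * (3 * L) +
            (Ts : ℝ) * (p * (4 * L / Ts) + (4 * L / Ts) ^ 2 / 8)) := (Real.exp_add _ _).symm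
      _ = Real.exp (-(2 * L ^ 2 / Ts)) := by
          congr 1
          rw [hpval]
          field_simp
          ring
      _ = δ₁ / 2 := hexp_half
  -- lower tail
  have hlower : μ {ω | S ω ≤ L} ≤ ENNReal.ofReal (δ₁ / 2) := by
    rw [ENNReal.le_ofReal_iff_toReal_le (measure_ne_top μ _) (by positivity)]
    have ht0 : (-(4 * L / Ts) : ℝ) ≤ 0 := neg_nonpos.mpr (by positivity)
    calc (μ {ω | S ω ≤ L}).toReal
        ≤ Real.exp (-(-(4 * L / Ts)) * L) * ProbabilityTheory.mgf S μ (-(4 * L / Ts)) :=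
          ProbabilityTheory.measure_le_le_exp_mul_mgf L ht0 (hSInt _)
      _ ≤ Real.exp (-(-(4 * L / Ts)) * L) *
            Real.exp ((Ts : ℝ) * (p * (-(4 * L / Ts)) + (-(4 * L / Ts)) ^ 2 / 8)) := by
          exact mul_le_mul_of_nonneg_left (hmgfS _) (Real.exp_pos _).le
      _ = Real.exp (-(-(4 * L / Ts)) * L +
            (Ts : ℝ) * (p * (-(4 * L / Ts)) + (-(4 * L / Ts)) ^ 2 / 8)) := (Real.exp_add _ _).symm
      _ = Real.exp (-(2 * L ^ 2 / Ts)) := by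
          congr 1
          rw [hpval]
          field_simp
          ring
      _ = δ₁ / 2 := hexp_half
  -- assemble
  set G : Set Ω := {ω | L ≤ S ω ∧ S ω ≤ 3 * L} with hGdef
  have hGmeas : MeasurableSet G := by
    exact (measurableSet_le measurable_const hSmeas).inter
      (measurableSet_le hSmeas measurable_const)
  have hsub : Gᶜ ⊆ {ω | S ω ≤ L} ∪ {ω | 3 * L ≤ S ω} := by
    intro ω hω
    simp only [hGdef, Set.mem_compl_iff, Set.mem_setOf_eq, not_and_or, not_le] at hω
    rcases hω with h | h
    · exact Or.inl (le_of_lt h)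
    · exact Or.inr (le_of_lt h)
  have hGc : μ Gᶜ ≤ ENNReal.ofReal δ₁ := by
    calc μ Gᶜ ≤ μ ({ω | S ω ≤ L} ∪ {ω | 3 * L ≤ S ω}) := measure_mono hsub
      _ ≤ μ {ω | S ω ≤ L} + μ {ω | 3 * L ≤ S ω} := measure_union_le _ _
      _ ≤ ENNReal.ofReal (δ₁ / 2) + ENNReal.ofReal (δ₁ / 2) := add_le_add hlower hupper
      _ = ENNReal.ofReal δ₁ := by
          rw [← ENNReal.ofReal_add (by positivity) (by positivity)]
          norm_num
  have hGeq : μ G = 1 - μ Gᶜ := by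
    have := measure_compl hGmeas.compl (measure_ne_top μ _)
    rw [compl_compl] at this
    rw [this, measure_univ]
  have hfinal : ENNReal.ofReal (1 - δ₁) ≤ μ G := by
    rw [hGeq]
    calc ENNReal.ofReal (1 - δ₁) = ENNReal.ofReal 1 - ENNReal.ofReal δ₁ :=
          ENNReal.ofReal_sub 1 hδ₁.le
      _ = 1 - ENNReal.ofReal δ₁ := by rw [ENNReal.ofReal_one]
      _ ≤ 1 - μ Gᶜ := tsub_le_tsub_left hGc 1
  exact hfinal
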